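/- Let p̃, q̃ ∈ (0,1) and define H(x,y) = x·ln(x/y) + (1−x)·ln((1−x)/(1−y)) for x, y ∈ (0,1). Then: (i) (1−2q̃)·ln(p̃/(1−p̃)) ≤ H(q̃, p̃), with equality if and only if p̃ + q̃ = 1; and (ii) (2p̃−1)·ln((1−q̃)/q̃) ≤ H(p̃, q̃), with equality if and only if p̃ + q̃ = 1. -/

import Mathlib

lemma kl_aux {a b : ℝ} (ha : 0 < a) (ha1 : a < 1) (hb : 0 < b) (hb1 : b < 1) :
    0 ≤ a * Real.log (a / b) + (1 - a) * Real.log ((1 - a) / (1 - b)) ∧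
    (a * Real.log (a / b) + (1 - a) * Real.log ((1 - a) / (1 - b)) = 0 ↔ a = b) := by
  have ha' : (0:ℝ) < 1 - a := by linarith
  have hb' : (0:ℝ) < 1 - b := by linarith
  have l1 : Real.log (a / b) = Real.log a - Real.log b := Real.log_div ha.ne' hb.ne'
  have l2 : Real.log ((1-a)/(1-b)) = Real.log (1-a) - Real.log (1-b) :=
    Real.log_div ha'.ne' hb'.ne'
  have h1 : Real.log (b / a) ≤ b / a - 1 := Real.log_le_sub_one_of_pos (by positivity)
  have h2 : Real.log ((1-b)/(1-a)) ≤ (1-b)/(1-a) - 1 := Real.log_le_sub_one_of_pos (by positivity)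
  have l3 : Real.log (b / a) = Real.log b - Real.log a := Real.log_div hb.ne' ha.ne'
  have l4 : Real.log ((1-b)/(1-a)) = Real.log (1-b) - Real.log (1-a) :=
    Real.log_div hb'.ne' ha'.ne'
  rw [l3] at h1
  rw [l4] at h2
  have e1 : a * (b / a - 1) = b - a := by field_simp
  have e2 : (1-a) * ((1-b)/(1-a) - 1) = a - b := by field_simp; ring
  have h1' : a * (Real.log b - Real.log a) ≤ b - a := by
    calc a * (Real.log b - Real.log a) ≤ a * (b/a - 1) :=
          mul_le_mul_of_nonneg_left h1 ha.le
      _ = b - a := e1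
  have h2' : (1-a) * (Real.log (1-b) - Real.log (1-a)) ≤ a - b := by
    calc (1-a) * (Real.log (1-b) - Real.log (1-a)) ≤ (1-a) * ((1-b)/(1-a) - 1) :=
          mul_le_mul_of_nonneg_left h2 ha'.le
      _ = a - b := e2
  constructor
  · rw [l1, l2]; nlinarith [h1', h2']
  · constructor
    · intro hE
      by_contra hab
      have hba : b / a ≠ 1 := fun h => hab (((div_eq_one_iff_eq ha.ne').mp h).symm)
      have h1s : Real.log b - Real.log a < b / a - 1 := by
        have := Real.log_lt_sub_one_of_pos (show (0:ℝ) < b/a by positivity) hba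
        rwa [l3] at this
      have h1s' : a * (Real.log b - Real.log a) < b - a := by
        calc a * (Real.log b - Real.log a) < a * (b/a - 1) :=
              mul_lt_mul_of_pos_left h1s ha
          _ = b - a := e1
      rw [l1, l2] at hE
      nlinarith [h1s', h2']
    · intro h
      subst h
      simp [div_self ha.ne', div_self ha'.ne']

/-- Key inequalities in the proof of part 1 of Lemma 2 of the paper:
`(1−2q̃)·ln(p̃/(1−p̃)) ≤ H(q̃,p̃)` and `(2p̃−1)·ln((1−q̃)/q̃) ≤ H(p̃,q̃)`, each with
equality if and only if `p̃ + q̃ = 1`. -/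
theorem stmt_16 (pt qt : ℝ) (hp : pt ∈ Set.Ioo (0 : ℝ) 1) (hq : qt ∈ Set.Ioo (0 : ℝ) 1)
    (H : ℝ → ℝ → ℝ)
    (hH : ∀ x y, H x y = x * Real.log (x / y) + (1 - x) * Real.log ((1 - x) / (1 - y))) :
    ((1 - 2 * qt) * Real.log (pt / (1 - pt)) ≤ H qt pt ∧
      ((1 - 2 * qt) * Real.log (pt / (1 - pt)) = H qt pt ↔ pt + qt = 1)) ∧
    ((2 * pt - 1) * Real.log ((1 - qt) / qt) ≤ H pt qt ∧
      ((2 * pt - 1) * Real.log ((1 - qt) / qt) = H pt qt ↔ pt + qt = 1)) := by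
  obtain ⟨hp0, hp1⟩ := hp
  obtain ⟨hq0, hq1⟩ := hq
  have hp' : (0:ℝ) < 1 - pt := by linarith
  have hq' : (0:ℝ) < 1 - qt := by linarith
  obtain ⟨hKL1, hKLiff1⟩ := kl_aux hq0 hq1 hp' (by linarith : (1:ℝ) - pt < 1)
  obtain ⟨hKL2, hKLiff2⟩ := kl_aux hp0 hp1 hq' (by linarith : (1:ℝ) - qt < 1)
  have e1 : (1:ℝ) - (1 - pt) = pt := by ring
  have e2 : (1:ℝ) - (1 - qt) = qt := by ring
  rw [e1] at hKL1 hKLiff1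
  rw [e2] at hKL2 hKLiff2
  have key1 : H qt pt - (1 - 2*qt) * Real.log (pt/(1-pt)) =
      qt * Real.log (qt/(1-pt)) + (1-qt) * Real.log ((1-qt)/pt) := by
    rw [hH, Real.log_div hp0.ne' hp'.ne', Real.log_div hq0.ne' hp0.ne',
        Real.log_div hq'.ne' hp'.ne', Real.log_div hq0.ne' hp'.ne',
        Real.log_div hq'.ne' hp0.ne']
    ring
  have key2 : H pt qt - (2*pt - 1) * Real.log ((1-qt)/qt) =
      pt * Real.log (pt/(1-qt)) + (1-pt) * Real.log ((1-pt)/qt) := by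
    rw [hH, Real.log_div hq'.ne' hq0.ne', Real.log_div hp0.ne' hq0.ne',
        Real.log_div hp'.ne' hq'.ne', Real.log_div hp0.ne' hq'.ne',
        Real.log_div hp'.ne' hq0.ne']
    ring
  refine ⟨⟨by linarith, ?_⟩, ⟨by linarith, ?_⟩⟩
  · constructor
    · intro h
      have : qt = 1 - pt := hKLiff1.mp (by linarith)
      linarith
    · intro h
      have : qt = 1 - pt := by linarith
      have := hKLiff1.mpr this
      linarith
  · constructor
    · intro h
      have : pt = 1 - qt := hKLiff2.mp (by linarith)
      linarith
    · intro h
      have : pt = 1 - qt := by linarith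
      have := hKLiff2.mpr this
      linarith
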